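/- There exist constants C > 0 and Z > 0 such that for all ζ̄ ≥ Z the inverse function t satisfies: |t(ζ̄) − (4/3)^{1/2}·ζ̄^{3/4}| ≤ C·ζ̄^{−1/4}; |t'(ζ̄) − (3/4)^{1/2}·ζ̄^{−1/4}| ≤ C·ζ̄^{−5/4}; |t''(ζ̄) + (1/4)·(3/4)^{1/2}·ζ̄^{−5/4}| ≤ C·ζ̄^{−9/4}; and |t'''(ζ̄) − (5/16)·(3/4)^{1/2}·ζ̄^{−9/4}| ≤ C·ζ̄^{−13/4}. -/

import Mathlib

set_option maxHeartbeats 1000000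

open MeasureTheory Set intervalIntegral Filter

/-- The function `ζ : (−1,∞) → ℝ`, given by
`ζ(t) = ((3/2)∫₁ᵗ √(τ²−1) dτ)^{2/3}` for `t ≥ 1` and
`ζ(t) = −((3/2)∫ₜ¹ √(1−τ²) dτ)^{2/3}` for `t < 1`. -/
noncomputable def zeta (t : ℝ) : ℝ :=
  if 1 ≤ t then ((3/2) * ∫ τ in (1:ℝ)..t, Real.sqrt (τ ^ 2 - 1)) ^ ((2:ℝ)/3)
  else -(((3/2) * ∫ τ in t..(1:ℝ), Real.sqrt (1 - τ ^ 2)) ^ ((2:ℝ)/3))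

/-- `tf` is the inverse function `t(·) : (ζ(−1), ∞) → (−1, ∞)` of `ζ`. -/
def IsZetaInv (tf : ℝ → ℝ) : Prop :=
  (∀ t : ℝ, -1 < t → tf (zeta t) = t) ∧
  (∀ u : ℝ, zeta (-1) < u → -1 < tf u ∧ zeta (tf u) = u)



noncomputable def J (t : ℝ) : ℝ := ∫ τ in (1:ℝ)..t, Real.sqrt (τ ^ 2 - 1)

lemma cont_integrand : Continuous fun τ : ℝ => Real.sqrt (τ ^ 2 - 1) := by
  fun_prop

lemma intble (a b : ℝ) : IntervalIntegrable (fun τ : ℝ => Real.sqrt (τ ^ 2 - 1)) volume a b :=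
  cont_integrand.intervalIntegrable a b

lemma hi_id (a b : ℝ) : IntervalIntegrable (fun τ : ℝ => τ) volume a b :=
  (continuous_id'.intervalIntegrable a b)

lemma hi_inv {t : ℝ} (ht : 1 ≤ t) : IntervalIntegrable (fun τ : ℝ => 1/τ) volume 1 t := by
  apply ContinuousOn.intervalIntegrable
  apply ContinuousOn.div continuousOn_const (fun τ _ => continuousWithinAt_id)
  intro x hx
  rw [uIcc_of_le ht] at hx
  have : (1:ℝ) ≤ x := hx.1
  intro h
  have hx0 : x = 0 := h
  linarith

lemma J_nonneg {t : ℝ} (ht : 1 ≤ t) : 0 ≤ J t := by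
  apply intervalIntegral.integral_nonneg ht
  intro x _; positivity

lemma J_upper {t : ℝ} (ht : 1 ≤ t) : J t ≤ (t ^ 2 - 1) / 2 := by
  have h1 : J t ≤ ∫ τ in (1:ℝ)..t, τ := by
    apply intervalIntegral.integral_mono_on ht (intble 1 t) (hi_id 1 t)
    intro x hx
    calc Real.sqrt (x ^ 2 - 1) ≤ Real.sqrt (x ^ 2) := Real.sqrt_le_sqrt (by linarith)
      _ = x := Real.sqrt_sq (by linarith [hx.1])
  rw [integral_id] at h1
  linarith

lemma J_lower {t : ℝ} (ht : 1 ≤ t) : (t ^ 2 - 1) / 2 - Real.log t ≤ J t := by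
  have h1 : (∫ τ in (1:ℝ)..t, (τ - 1/τ)) ≤ J t := by
    apply intervalIntegral.integral_mono_on ht ((hi_id 1 t).sub (hi_inv ht)) (intble 1 t)
    intro x hx
    have hx1 : 1 ≤ x := hx.1
    have hxpos : (0:ℝ) < x := by linarith
    have h0 : 0 ≤ x - 1/x := by
      rw [sub_nonneg, div_le_iff₀ hxpos]
      nlinarith
    rw [show x - 1/x = Real.sqrt ((x - 1/x)^2) from (Real.sqrt_sq h0).symm]
    apply Real.sqrt_le_sqrt
    have e : (x - 1/x)^2 = x^2 - 2 + (1/x)^2 := by field_simp; ring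
    have e2 : (1/x)^2 ≤ 1 := by
      rw [div_pow, div_le_one (by positivity)]
      nlinarith
    rw [e]; linarith
  have h2 : (∫ τ in (1:ℝ)..t, (τ - 1/τ)) = (t^2-1)/2 - Real.log t := by
    rw [intervalIntegral.integral_sub (hi_id 1 t) (hi_inv ht), integral_id, integral_one_div]
    · norm_num
    · intro h
      rw [uIcc_of_le ht] at h
      have : (1:ℝ) ≤ 0 := h.1
      norm_num at this
  linarith

lemma zeta_eq {t : ℝ} (ht : 1 ≤ t) : zeta t = ((3/2) * J t) ^ ((2:ℝ)/3) := by
  rw [zeta, if_pos ht]; rfl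

lemma zeta_pow {t : ℝ} (ht : 1 ≤ t) : (zeta t) ^ ((3:ℝ)/2) = (3/2) * J t := by
  have h0 : 0 ≤ (3/2) * J t := by
    have := J_nonneg ht; linarith
  rw [zeta_eq ht, ← Real.rpow_mul h0]
  norm_num

lemma zeta_nonpos {t : ℝ} (ht : ¬ (1 ≤ t)) : zeta t ≤ 0 := by
  rw [zeta, if_neg ht]
  have h0 : 0 ≤ ((3/2) * ∫ τ in t..(1:ℝ), Real.sqrt (1 - τ ^ 2)) ^ ((2:ℝ)/3) := by
    apply Real.rpow_nonneg
    have : 0 ≤ ∫ τ in t..(1:ℝ), Real.sqrt (1 - τ ^ 2) := by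
      apply intervalIntegral.integral_nonneg (by linarith [not_le.mp ht])
      intro x _; positivity
    linarith
  linarith

lemma zeta_small {t : ℝ} (ht : t < 100) : zeta t ≤ 7500 := by
  by_cases h : 1 ≤ t
  · rw [zeta_eq h]
    have hJ : J t ≤ 5000 := by
      have := J_upper h; nlinarith
    have h1 : ((3:ℝ)/2 * J t) ≤ 7500 := by linarith
    have h0 : 0 ≤ (3:ℝ)/2 * J t := by have := J_nonneg h; linarith
    calc ((3:ℝ)/2 * J t) ^ ((2:ℝ)/3) ≤ (7500:ℝ) ^ ((2:ℝ)/3) :=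
          Real.rpow_le_rpow h0 h1 (by norm_num)
      _ ≤ (7500:ℝ) ^ ((1:ℝ)) := Real.rpow_le_rpow_of_exponent_le (by norm_num) (by norm_num)
      _ = 7500 := Real.rpow_one _
  · linarith [zeta_nonpos h]

lemma key {tf : ℝ → ℝ} (htf : IsZetaInv tf) {u : ℝ} (hu : 10000 ≤ u) :
    100 ≤ tf u ∧ zeta (tf u) = u ∧ ((3:ℝ)/2) * J (tf u) = u ^ ((3:ℝ)/2) ∧
    HasDerivAt tf (Real.sqrt u / Real.sqrt ((tf u)^2 - 1)) u := by
  have hz1 : zeta (-1) ≤ 0 := zeta_nonpos (by norm_num)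
  have hu0 : (0:ℝ) < u := by linarith
  obtain ⟨htm1, hzt⟩ := htf.2 u (by linarith)
  set t := tf u with htdef
  have ht100 : 100 ≤ t := by
    by_contra h
    push_neg at h
    have := zeta_small h
    rw [hzt] at this; linarith
  have ht1 : (1:ℝ) ≤ t := by linarith
  have hup : ((3:ℝ)/2) * J t = u ^ ((3:ℝ)/2) := by
    rw [← hzt, zeta_pow ht1]
  have hXpos : 0 < (3/2 : ℝ) * J t := by
    rw [hup]; exact Real.rpow_pos_of_pos hu0 _
  -- strict derivative of J
  have hJd : HasStrictDerivAt J (Real.sqrt (t^2-1)) t :=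
    intervalIntegral.integral_hasStrictDerivAt_right (intble 1 t)
      (cont_integrand.stronglyMeasurable.stronglyMeasurableAtFilter)
      cont_integrand.continuousAt
  have hq0 : 0 < Real.sqrt (t^2 - 1) := Real.sqrt_pos.mpr (by nlinarith)
  have hFd : HasStrictDerivAt (fun s => ((3/2) * J s) ^ ((2:ℝ)/3))
      ((2:ℝ)/3 * ((3/2) * J t) ^ ((2:ℝ)/3 - 1) * ((3/2) * Real.sqrt (t^2-1))) t := by
    have houter := Real.hasStrictDerivAt_rpow_const_of_ne (ne_of_gt hXpos) ((2:ℝ)/3)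
    exact HasStrictDerivAt.comp t houter (hJd.const_mul (3/2 : ℝ))
  have hev : zeta =ᶠ[nhds t] (fun s => ((3/2) * J s) ^ ((2:ℝ)/3)) := by
    filter_upwards [eventually_ge_nhds (show (1:ℝ) < t by linarith)] with s hs
    exact zeta_eq hs
  have hzd : HasStrictDerivAt zeta
      ((2:ℝ)/3 * ((3/2) * J t) ^ ((2:ℝ)/3 - 1) * ((3/2) * Real.sqrt (t^2-1))) t :=
    hFd.congr_of_eventuallyEq hev.symm
  -- simplify derivative value
  have hDval : (2:ℝ)/3 * ((3/2) * J t) ^ ((2:ℝ)/3 - 1) * ((3/2) * Real.sqrt (t^2-1))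
      = Real.sqrt (t^2-1) / Real.sqrt u := by
    rw [hup, ← Real.rpow_mul hu0.le]
    norm_num
    rw [Real.rpow_neg hu0.le, show (1:ℝ)/2 = 1/(2:ℝ) by norm_num, ← Real.sqrt_eq_rpow]
    field_simp
  rw [hDval] at hzd
  have hD0 : Real.sqrt (t^2-1) / Real.sqrt u ≠ 0 := by positivity
  have hg : ∀ᶠ x in nhds t, tf (zeta x) = x := by
    filter_upwards [eventually_gt_nhds (show (-1:ℝ) < t by linarith)] with s hs
    exact htf.1 s hs
  have hinv := (hzd.to_local_left_inverse hD0 hg).hasDerivAt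
  rw [hzt, inv_div] at hinv
  exact ⟨ht100, hzt, hup, hinv⟩

noncomputable def qf (tf : ℝ → ℝ) (v : ℝ) : ℝ := Real.sqrt ((tf v)^2 - 1)
noncomputable def d1 (tf : ℝ → ℝ) (v : ℝ) : ℝ := Real.sqrt v / qf tf v
noncomputable def d2 (tf : ℝ → ℝ) (v : ℝ) : ℝ :=
  1/(2 * Real.sqrt v * qf tf v) - v * tf v / (qf tf v)^4
noncomputable def d3 (tf : ℝ → ℝ) (v : ℝ) : ℝ :=
  -(1/(4 * (v * Real.sqrt v) * qf tf v)) - (3/2) * tf v / (qf tf v)^4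
  - v * Real.sqrt v / (qf tf v)^5 + 4 * (v * Real.sqrt v) * (tf v)^2 / (qf tf v)^7

section derivs
variable {tf : ℝ → ℝ} (htf : IsZetaInv tf)
include htf

lemma basicfacts {u : ℝ} (hu : 10000 ≤ u) :
    0 < u ∧ 100 ≤ tf u ∧ 0 < qf tf u ∧ (qf tf u)^2 = (tf u)^2 - 1 ∧
    (Real.sqrt u)^2 = u ∧ 0 < Real.sqrt u := by
  obtain ⟨ht100, -, -, -⟩ := key htf hu
  have hu0 : (0:ℝ) < u := by linarith
  have h1 : (0:ℝ) < (tf u)^2 - 1 := by nlinarith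
  exact ⟨hu0, ht100, Real.sqrt_pos.mpr h1, Real.sq_sqrt h1.le, Real.sq_sqrt hu0.le,
    Real.sqrt_pos.mpr hu0⟩

lemma hasDerivAt_qf {u : ℝ} (hu : 10000 ≤ u) :
    HasDerivAt (qf tf) (1/(2 * qf tf u) * (2 * tf u * (Real.sqrt u / qf tf u))) u := by
  obtain ⟨hu0, ht100, hq0, hq2, hsu, hsu0⟩ := basicfacts htf hu
  obtain ⟨-, -, -, htd⟩ := key htf hu
  have hinner : HasDerivAt (fun v => (tf v)^2 - 1)
      (2 * tf u * (Real.sqrt u / Real.sqrt ((tf u)^2 - 1))) u := by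
    have := (htd.pow 2).sub_const 1
    simpa using this
  have houter := Real.hasDerivAt_sqrt (x := (tf u)^2 - 1) (by nlinarith)
  have := houter.comp u hinner
  exact this
lemma hasDerivAt_d1 {u : ℝ} (hu : 10000 ≤ u) : HasDerivAt (d1 tf) (d2 tf u) u := by
  obtain ⟨hu0, ht100, hq0, hq2, hsu, hsu0⟩ := basicfacts htf hu
  have hsq : HasDerivAt (fun v => Real.sqrt v) (1/(2 * Real.sqrt u)) u :=
    Real.hasDerivAt_sqrt (ne_of_gt hu0)
  have hdiv := hsq.div (hasDerivAt_qf htf hu) (ne_of_gt hq0)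
  refine hdiv.congr_deriv (Eq.symm ?_)
  rw [d2]
  set su := Real.sqrt u with hsudef
  set q := qf tf u with hqdef
  set t := tf u with htdef
  have hu_eq : u = su^2 := hsu.symm
  rw [hu_eq]
  field_simp
lemma hasDerivAt_d2 {u : ℝ} (hu : 10000 ≤ u) : HasDerivAt (d2 tf) (d3 tf u) u := by
  obtain ⟨hu0, ht100, hq0, hq2, hsu, hsu0⟩ := basicfacts htf hu
  obtain ⟨-, -, -, htd⟩ := key htf hu
  have hsq : HasDerivAt (fun v => Real.sqrt v) (1/(2 * Real.sqrt u)) u :=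
    Real.hasDerivAt_sqrt (ne_of_gt hu0)
  have hqd := hasDerivAt_qf htf hu
  have hA : HasDerivAt (fun v => 2 * Real.sqrt v * qf tf v)
      (2 * (1/(2 * Real.sqrt u)) * qf tf u +
        (2 * Real.sqrt u) * (1/(2 * qf tf u) * (2 * tf u * (Real.sqrt u / qf tf u)))) u :=
    (hsq.const_mul 2).mul hqd
  have hA0 : 2 * Real.sqrt u * qf tf u ≠ 0 := by positivity
  have hAd := (hasDerivAt_const u (1:ℝ)).div hA hA0
  have hB : HasDerivAt (fun v => (qf tf v)^4)
      (4 * (qf tf u)^3 * (1/(2 * qf tf u) * (2 * tf u * (Real.sqrt u / qf tf u)))) u := by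
    have := hqd.pow 4
    exact this.congr_deriv (by norm_num)
  have hB0 : (qf tf u)^4 ≠ 0 := by positivity
  have hC : HasDerivAt (fun v => v * tf v) (1 * tf u + u * (Real.sqrt u / Real.sqrt ((tf u)^2-1))) u :=
    (hasDerivAt_id u).mul htd
  have hCd := hC.div hB hB0
  have := hAd.sub hCd
  refine this.congr_deriv (Eq.symm ?_)
  rw [d3]
  set su := Real.sqrt u with hsudef
  set q := qf tf u with hqdef
  set t := tf u with htdef
  have hu_eq : u = su^2 := hsu.symm
  have hqfeq : Real.sqrt (t^2 - 1) = q := rfl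
  rw [hqfeq, hu_eq]
  field_simp
  ring
lemma deriv_tf_eq {v : ℝ} (hv : 10000 ≤ v) : deriv tf v = d1 tf v :=
  (key htf hv).2.2.2.deriv
lemma iteratedDeriv2_eq {u : ℝ} (hu : 10000 < u) : iteratedDeriv 2 tf u = d2 tf u := by
  have hev : deriv tf =ᶠ[nhds u] d1 tf := by
    filter_upwards [Ioi_mem_nhds hu] with v hv
    exact deriv_tf_eq htf (le_of_lt hv)
  rw [iteratedDeriv_succ, iteratedDeriv_one, hev.deriv_eq]
  exact (hasDerivAt_d1 htf hu.le).deriv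
lemma iteratedDeriv3_eq {u : ℝ} (hu : 10001 ≤ u) : iteratedDeriv 3 tf u = d3 tf u := by
  have hev : iteratedDeriv 2 tf =ᶠ[nhds u] d2 tf := by
    filter_upwards [Ioi_mem_nhds (show (10000:ℝ) < u by linarith)] with v hv
    exact iteratedDeriv2_eq htf hv
  rw [iteratedDeriv_succ, hev.deriv_eq]
  exact (hasDerivAt_d2 htf (by linarith)).deriv
end derivs

section estimates
variable {w t q a : ℝ}

lemma pow_step {w c C : ℝ} (hw : 10 ≤ w) (p g : ℕ) (hC0 : 0 ≤ C) (hC : c ≤ C * 10^g) :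
    c * w^p ≤ C * w^(p+g) := by
  have hw0 : (0:ℝ) < w := by linarith
  have h2 : (10:ℝ)^g ≤ w^g := pow_le_pow_left₀ (by norm_num) hw g
  calc c*w^p ≤ (C*10^g)*w^p := mul_le_mul_of_nonneg_right hC (pow_nonneg hw0.le p)
    _ ≤ (C*w^g)*w^p := mul_le_mul_of_nonneg_right (mul_le_mul_of_nonneg_left h2 hC0) (pow_nonneg hw0.le p)
    _ = C * w^(p+g) := by rw [pow_add]; ring

lemma derived_facts (hw : 10 ≤ w) (ht : 100 ≤ t) (hq0 : 0 < q)
    (hq2 : q^2 = t^2 - 1) (ha0 : 0 < a) (ha2 : 3 * a^2 = 4 * w^6)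
    (hd1 : 1 ≤ t^2 - a^2) (hd2 : t^2 - a^2 ≤ 13 * w) :
    0 < w ∧ w^3 ≤ a ∧ a ≤ 2*w^3 ∧ a ≤ q ∧ q ≤ t ∧
    (q - a) * w^2 ≤ 7 ∧ (t - a) * w^2 ≤ 7 ∧ 0 ≤ q - a ∧ 0 ≤ t - a := by
  have hw0 : (0:ℝ) < w := by linarith
  have hw6 : (1000000:ℝ) ≤ w^6 := by nlinarith [pow_le_pow_left₀ (by norm_num : (0:ℝ) ≤ 10) hw 6]
  have haw : w^3 ≤ a := by nlinarith [sq_nonneg (a - w^3), pow_pos hw0 3]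
  have haw2 : a ≤ 2*w^3 := by nlinarith [sq_nonneg (a - 2*w^3), pow_pos hw0 3]
  have hqa : a ≤ q := by nlinarith
  have hqt : q ≤ t := by nlinarith
  have heps : (q - a) * w^2 ≤ 7 := by nlinarith [pow_pos hw0 3, pow_pos hw0 2]
  have hdel : (t - a) * w^2 ≤ 7 := by nlinarith [pow_pos hw0 3, pow_pos hw0 2]
  exact ⟨hw0, haw, haw2, hqa, hqt, heps, hdel, by nlinarith [pow_pos hw0 3], by nlinarith [pow_pos hw0 3]⟩

lemma boundB1 (hw : 10 ≤ w) (ht : 100 ≤ t) (hq0 : 0 < q)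
    (hq2 : q^2 = t^2 - 1) (ha0 : 0 < a) (ha2 : 3 * a^2 = 4 * w^6)
    (hd1 : 1 ≤ t^2 - a^2) (hd2 : t^2 - a^2 ≤ 13 * w) :
    |t - a| ≤ 1000 * (1/w) := by
  obtain ⟨hw0, haw, haw2, hqa, hqt, heps, hdel, he0, hd0⟩ :=
    derived_facts hw ht hq0 hq2 ha0 ha2 hd1 hd2
  rw [abs_of_nonneg hd0, mul_one_div, le_div_iff₀ hw0]
  nlinarith [pow_pos hw0 2]

lemma boundB2 (hw : 10 ≤ w) (ht : 100 ≤ t) (hq0 : 0 < q)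
    (hq2 : q^2 = t^2 - 1) (ha0 : 0 < a) (ha2 : 3 * a^2 = 4 * w^6)
    (hd1 : 1 ≤ t^2 - a^2) (hd2 : t^2 - a^2 ≤ 13 * w) :
    |w^2/q - w^2/a| ≤ 1000 * (1/w^5) := by
  obtain ⟨hw0, haw, haw2, hqa, hqt, heps, hdel, he0, hd0⟩ :=
    derived_facts hw ht hq0 hq2 ha0 ha2 hd1 hd2
  have he : w^2/q - w^2/a = -(w^2*(q-a)/(q*a)) := by field_simp; ring
  rw [he, abs_neg, abs_of_nonneg (by positivity), mul_one_div,
    div_le_div_iff₀ (by positivity) (by positivity)]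
  have hqa6 : w^6 ≤ q*a := by nlinarith [pow_pos hw0 3]
  nlinarith [pow_pos hw0 5, pow_pos hw0 2, pow_pos hw0 6,
    mul_le_mul_of_nonneg_left heps (le_of_lt (pow_pos hw0 5)),
    mul_le_mul_of_nonneg_left hqa6 (by norm_num : (0:ℝ) ≤ 1000)]

lemma boundB3 (hw : 10 ≤ w) (ht : 100 ≤ t) (hq0 : 0 < q)
    (hq2 : q^2 = t^2 - 1) (ha0 : 0 < a) (ha2 : 3 * a^2 = 4 * w^6)
    (hd1 : 1 ≤ t^2 - a^2) (hd2 : t^2 - a^2 ≤ 13 * w) :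
    |1/(2*w^2*q) - w^4*t/q^4 + 1/(4*(a*w^2))| ≤ 1000 * (1/w^9) := by
  obtain ⟨hw0, haw, haw2, hqa, hqt, heps, hdel, he0, hd0⟩ :=
    derived_facts hw ht hq0 hq2 ha0 ha2 hd1 hd2
  have he0' : 0 ≤ (q-a)*w^2 := mul_nonneg he0 (by positivity)
  have hd0' : 0 ≤ (t-a)*w^2 := mul_nonneg hd0 (by positivity)
  have he3 : 1/(2*w^2*q) - w^4*t/q^4 + 1/(4*(a*w^2))
      = (2*q^3*a - 4*w^6*t*a + q^4)/(4*w^2*q^4*a) := by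
    field_simp
    ring
  have hnum : 2*q^3*a - 4*w^6*t*a + q^4 =
      10*(a^3*(q-a)) - 3*(a^3*(t-a)) + 12*(a^2*(q-a)^2) + 6*(a*(q-a)^3) + ((q-a)^4) := by
    linear_combination (t*a) * ha2
  have T1 : a^3 * (q-a) ≤ 60 * w^7 := by
    have H : (a^3 * (q-a)) * w^2 ≤ (60 * w^7) * w^2 := by
      have step2 : (a^3 * (q-a)) * w^2 ≤ (2*w^3)^3 * (7:ℝ) := by
        have e1 : (a^3 * (q-a)) * w^2 = a^3 * ((q-a)*w^2) := by ring
        rw [e1]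
        gcongr <;> first | assumption | positivity
      refine le_trans step2 ?_
      have hps := pow_step (c := 56) (C := 60) hw 9 0 (by norm_num) (by norm_num)
      calc (2*w^3)^3 * (7:ℝ) = (56:ℝ) * w^9 := by ring
        _ ≤ 60 * w^(9+0) := hps
        _ = (60 * w^7) * w^2 := by rw [pow_add]; ring
    exact le_of_mul_le_mul_right H (by positivity)
  have T2 : a^3 * (t-a) ≤ 60 * w^7 := by
    have H : (a^3 * (t-a)) * w^2 ≤ (60 * w^7) * w^2 := by
      have step2 : (a^3 * (t-a)) * w^2 ≤ (2*w^3)^3 * (7:ℝ) := by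
        have e1 : (a^3 * (t-a)) * w^2 = a^3 * ((t-a)*w^2) := by ring
        rw [e1]
        gcongr <;> first | assumption | positivity
      refine le_trans step2 ?_
      have hps := pow_step (c := 56) (C := 60) hw 9 0 (by norm_num) (by norm_num)
      calc (2*w^3)^3 * (7:ℝ) = (56:ℝ) * w^9 := by ring
        _ ≤ 60 * w^(9+0) := hps
        _ = (60 * w^7) * w^2 := by rw [pow_add]; ring
    exact le_of_mul_le_mul_right H (by positivity)
  have T3 : a^2 * (q-a)^2 ≤ 1 * w^7 := by
    have H : (a^2 * (q-a)^2) * w^4 ≤ (1 * w^7) * w^4 := by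
      have step2 : (a^2 * (q-a)^2) * w^4 ≤ (2*w^3)^2 * (7:ℝ)^2 := by
        have e1 : (a^2 * (q-a)^2) * w^4 = a^2 * ((q-a)*w^2)^2 := by ring
        rw [e1]
        gcongr <;> first | assumption | positivity
      refine le_trans step2 ?_
      have hps := pow_step (c := 196) (C := 1) hw 6 5 (by norm_num) (by norm_num)
      calc (2*w^3)^2 * (7:ℝ)^2 = (196:ℝ) * w^6 := by ring
        _ ≤ 1 * w^(6+5) := hps
        _ = (1 * w^7) * w^4 := by rw [pow_add]; ring
    exact le_of_mul_le_mul_right H (by positivity)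
  have T4 : a * (q-a)^3 ≤ 1 * w^7 := by
    have H : (a * (q-a)^3) * w^6 ≤ (1 * w^7) * w^6 := by
      have step2 : (a * (q-a)^3) * w^6 ≤ (2*w^3) * (7:ℝ)^3 := by
        have e1 : (a * (q-a)^3) * w^6 = a * ((q-a)*w^2)^3 := by ring
        rw [e1]
        gcongr <;> first | assumption | positivity
      refine le_trans step2 ?_
      have hps := pow_step (c := 686) (C := 1) hw 3 10 (by norm_num) (by norm_num)
      calc (2*w^3) * (7:ℝ)^3 = (686:ℝ) * w^3 := by ring
        _ ≤ 1 * w^(3+10) := hps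
        _ = (1 * w^7) * w^6 := by rw [pow_add]; ring
    exact le_of_mul_le_mul_right H (by positivity)
  have T5 : (q-a)^4 ≤ 1 * w^7 := by
    have H : ((q-a)^4) * w^8 ≤ (1 * w^7) * w^8 := by
      have step2 : ((q-a)^4) * w^8 ≤ (7:ℝ)^4 := by
        have e1 : ((q-a)^4) * w^8 = ((q-a)*w^2)^4 := by ring
        rw [e1]
        gcongr <;> first | assumption | positivity
      refine le_trans step2 ?_
      have hps := pow_step (c := 2401) (C := 1) hw 0 15 (by norm_num) (by norm_num)
      calc (7:ℝ)^4 = (2401:ℝ) * w^0 := by ring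
        _ ≤ 1 * w^(0+15) := hps
        _ = (1 * w^7) * w^8 := by rw [pow_add]; ring
    exact le_of_mul_le_mul_right H (by positivity)
  have hNb : |2*q^3*a - 4*w^6*t*a + q^4| ≤ 700 * w^7 := by
    rw [hnum, abs_le]
    have n1 : 0 ≤ a^3*(q-a) := mul_nonneg (by positivity) he0
    have n2 : 0 ≤ a^3*(t-a) := mul_nonneg (by positivity) hd0
    have n3 : 0 ≤ a^2*(q-a)^2 := by positivity
    have n4 : 0 ≤ a*(q-a)^3 := mul_nonneg ha0.le (pow_nonneg he0 3)
    have n5 : 0 ≤ (q-a)^4 := by positivity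
    have hw7 : (0:ℝ) ≤ w^7 := pow_nonneg hw0.le 7
    exact ⟨by linarith, by linarith⟩
  rw [he3, abs_div, abs_of_pos (by positivity : (0:ℝ) < 4*w^2*q^4*a), mul_one_div,
    div_le_div_iff₀ (by positivity) (by positivity)]
  have hq4 : w^12 ≤ q^4 := by
    have h1 : (w^3)^4 ≤ q^4 := pow_le_pow_left₀ (by positivity) (le_trans haw hqa) 4
    calc w^12 = (w^3)^4 := by ring
      _ ≤ q^4 := h1
  have hch : w^12 * w^3 ≤ q^4 * a := mul_le_mul hq4 haw (pow_nonneg hw0.le 3) (by positivity)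
  calc |2*q^3*a - 4*w^6*t*a + q^4| * w^9 ≤ (700*w^7) * w^9 :=
        mul_le_mul_of_nonneg_right hNb (pow_nonneg hw0.le 9)
    _ = 700 * w^16 := by ring
    _ ≤ 4000 * w^(16+1) := pow_step hw 16 1 (by norm_num) (by norm_num)
    _ = (1000*(4*w^2)) * (w^12*w^3) := by ring
    _ ≤ (1000*(4*w^2)) * (q^4*a) := mul_le_mul_of_nonneg_left hch (by positivity)
    _ = 1000 * (4*w^2*q^4*a) := by ring

lemma boundB4 (hw : 10 ≤ w) (ht : 100 ≤ t) (hq0 : 0 < q)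
    (hq2 : q^2 = t^2 - 1) (ha0 : 0 < a) (ha2 : 3 * a^2 = 4 * w^6)
    (hd1 : 1 ≤ t^2 - a^2) (hd2 : t^2 - a^2 ≤ 13 * w) :
    |(-(1/(4*w^6*q)) - (3/2)*t/q^4 - w^6/q^5 + 4*w^6*t^2/q^7) - 5/(16*(a*w^6))| ≤
      1000 * (1/w^13) := by
  obtain ⟨hw0, haw, haw2, hqa, hqt, heps, hdel, he0, hd0⟩ :=
    derived_facts hw ht hq0 hq2 ha0 ha2 hd1 hd2
  have he0' : 0 ≤ (q-a)*w^2 := mul_nonneg he0 (by positivity)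
  have hd0' : 0 ≤ (t-a)*w^2 := mul_nonneg hd0 (by positivity)
  have he4 : (-(1/(4*w^6*q)) - (3/2)*t/q^4 - w^6/q^5 + 4*w^6*t^2/q^7) - 5/(16*(a*w^6))
      = (-4*q^6*a - 24*w^6*q^3*t*a - 16*w^12*q^2*a + 64*w^12*t^2*a - 5*q^7)/(16*w^6*q^7*a) := by
    field_simp
    ring
  have hnum : -4*q^6*a - 24*w^6*q^3*t*a - 16*w^12*q^2*a + 64*w^12*t^2*a - 5*q^7 =
      -(131*(a^6*(q-a))) + 54*(a^6*(t-a)) - 228*(a^5*(q-a)^2) - 54*(a^5*(q-a)*(t-a))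
      + 36*(a^5*(t-a)^2) - 273*(a^4*(q-a)^3) - 54*(a^4*(q-a)^2*(t-a)) - 235*(a^3*(q-a)^4)
      - 18*(a^3*(q-a)^3*(t-a)) - 129*(a^2*(q-a)^5) - 39*(a*(q-a)^6) - 5*((q-a)^7) := by
    linear_combination (6*q^3*t*a + q^2*a*(3*a^2+4*w^6) - 4*t^2*a*(3*a^2+4*w^6)) * ha2
  have S1 : a^6 * (q-a) ≤ 45 * w^17 := by
    have H : (a^6 * (q-a)) * w^2 ≤ (45 * w^17) * w^2 := by
      have step2 : (a^6 * (q-a)) * w^2 ≤ (2*w^3)^6 * (7:ℝ) := by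
        have e1 : (a^6 * (q-a)) * w^2 = a^6 * ((q-a)*w^2) := by ring
        rw [e1]
        gcongr <;> first | assumption | positivity
      refine le_trans step2 ?_
      have hps := pow_step (c := 448) (C := 45) hw 18 1 (by norm_num) (by norm_num)
      calc (2*w^3)^6 * (7:ℝ) = (448:ℝ) * w^18 := by ring
        _ ≤ 45 * w^(18+1) := hps
        _ = (45 * w^17) * w^2 := by rw [pow_add]; ring
    exact le_of_mul_le_mul_right H (by positivity)
  have S2 : a^6 * (t-a) ≤ 45 * w^17 := by
    have H : (a^6 * (t-a)) * w^2 ≤ (45 * w^17) * w^2 := by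
      have step2 : (a^6 * (t-a)) * w^2 ≤ (2*w^3)^6 * (7:ℝ) := by
        have e1 : (a^6 * (t-a)) * w^2 = a^6 * ((t-a)*w^2) := by ring
        rw [e1]
        gcongr <;> first | assumption | positivity
      refine le_trans step2 ?_
      have hps := pow_step (c := 448) (C := 45) hw 18 1 (by norm_num) (by norm_num)
      calc (2*w^3)^6 * (7:ℝ) = (448:ℝ) * w^18 := by ring
        _ ≤ 45 * w^(18+1) := hps
        _ = (45 * w^17) * w^2 := by rw [pow_add]; ring
    exact le_of_mul_le_mul_right H (by positivity)
  have S3 : a^5 * (q-a)^2 ≤ 1 * w^17 := by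
    have H : (a^5 * (q-a)^2) * w^4 ≤ (1 * w^17) * w^4 := by
      have step2 : (a^5 * (q-a)^2) * w^4 ≤ (2*w^3)^5 * (7:ℝ)^2 := by
        have e1 : (a^5 * (q-a)^2) * w^4 = a^5 * ((q-a)*w^2)^2 := by ring
        rw [e1]
        gcongr <;> first | assumption | positivity
      refine le_trans step2 ?_
      have hps := pow_step (c := 1568) (C := 1) hw 15 6 (by norm_num) (by norm_num)
      calc (2*w^3)^5 * (7:ℝ)^2 = (1568:ℝ) * w^15 := by ring
        _ ≤ 1 * w^(15+6) := hps
        _ = (1 * w^17) * w^4 := by rw [pow_add]; ring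
    exact le_of_mul_le_mul_right H (by positivity)
  have S4 : a^5 * (q-a) * (t-a) ≤ 1 * w^17 := by
    have H : (a^5 * (q-a) * (t-a)) * w^4 ≤ (1 * w^17) * w^4 := by
      have step2 : (a^5 * (q-a) * (t-a)) * w^4 ≤ (2*w^3)^5 * (7:ℝ) * (7:ℝ) := by
        have e1 : (a^5 * (q-a) * (t-a)) * w^4 = a^5 * ((q-a)*w^2) * ((t-a)*w^2) := by ring
        rw [e1]
        gcongr <;> first | assumption | positivity
      refine le_trans step2 ?_
      have hps := pow_step (c := 1568) (C := 1) hw 15 6 (by norm_num) (by norm_num)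
      calc (2*w^3)^5 * (7:ℝ) * (7:ℝ) = (1568:ℝ) * w^15 := by ring
        _ ≤ 1 * w^(15+6) := hps
        _ = (1 * w^17) * w^4 := by rw [pow_add]; ring
    exact le_of_mul_le_mul_right H (by positivity)
  have S5 : a^5 * (t-a)^2 ≤ 1 * w^17 := by
    have H : (a^5 * (t-a)^2) * w^4 ≤ (1 * w^17) * w^4 := by
      have step2 : (a^5 * (t-a)^2) * w^4 ≤ (2*w^3)^5 * (7:ℝ)^2 := by
        have e1 : (a^5 * (t-a)^2) * w^4 = a^5 * ((t-a)*w^2)^2 := by ring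
        rw [e1]
        gcongr <;> first | assumption | positivity
      refine le_trans step2 ?_
      have hps := pow_step (c := 1568) (C := 1) hw 15 6 (by norm_num) (by norm_num)
      calc (2*w^3)^5 * (7:ℝ)^2 = (1568:ℝ) * w^15 := by ring
        _ ≤ 1 * w^(15+6) := hps
        _ = (1 * w^17) * w^4 := by rw [pow_add]; ring
    exact le_of_mul_le_mul_right H (by positivity)
  have S6 : a^4 * (q-a)^3 ≤ 1 * w^17 := by
    have H : (a^4 * (q-a)^3) * w^6 ≤ (1 * w^17) * w^6 := by
      have step2 : (a^4 * (q-a)^3) * w^6 ≤ (2*w^3)^4 * (7:ℝ)^3 := by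
        have e1 : (a^4 * (q-a)^3) * w^6 = a^4 * ((q-a)*w^2)^3 := by ring
        rw [e1]
        gcongr <;> first | assumption | positivity
      refine le_trans step2 ?_
      have hps := pow_step (c := 5488) (C := 1) hw 12 11 (by norm_num) (by norm_num)
      calc (2*w^3)^4 * (7:ℝ)^3 = (5488:ℝ) * w^12 := by ring
        _ ≤ 1 * w^(12+11) := hps
        _ = (1 * w^17) * w^6 := by rw [pow_add]; ring
    exact le_of_mul_le_mul_right H (by positivity)
  have S7 : a^4 * (q-a)^2 * (t-a) ≤ 1 * w^17 := by
    have H : (a^4 * (q-a)^2 * (t-a)) * w^6 ≤ (1 * w^17) * w^6 := by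
      have step2 : (a^4 * (q-a)^2 * (t-a)) * w^6 ≤ (2*w^3)^4 * (7:ℝ)^2 * (7:ℝ) := by
        have e1 : (a^4 * (q-a)^2 * (t-a)) * w^6 = a^4 * ((q-a)*w^2)^2 * ((t-a)*w^2) := by ring
        rw [e1]
        gcongr <;> first | assumption | positivity
      refine le_trans step2 ?_
      have hps := pow_step (c := 5488) (C := 1) hw 12 11 (by norm_num) (by norm_num)
      calc (2*w^3)^4 * (7:ℝ)^2 * (7:ℝ) = (5488:ℝ) * w^12 := by ring
        _ ≤ 1 * w^(12+11) := hps
        _ = (1 * w^17) * w^6 := by rw [pow_add]; ring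
    exact le_of_mul_le_mul_right H (by positivity)
  have S8 : a^3 * (q-a)^4 ≤ 1 * w^17 := by
    have H : (a^3 * (q-a)^4) * w^8 ≤ (1 * w^17) * w^8 := by
      have step2 : (a^3 * (q-a)^4) * w^8 ≤ (2*w^3)^3 * (7:ℝ)^4 := by
        have e1 : (a^3 * (q-a)^4) * w^8 = a^3 * ((q-a)*w^2)^4 := by ring
        rw [e1]
        gcongr <;> first | assumption | positivity
      refine le_trans step2 ?_
      have hps := pow_step (c := 19208) (C := 1) hw 9 16 (by norm_num) (by norm_num)
      calc (2*w^3)^3 * (7:ℝ)^4 = (19208:ℝ) * w^9 := by ring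
        _ ≤ 1 * w^(9+16) := hps
        _ = (1 * w^17) * w^8 := by rw [pow_add]; ring
    exact le_of_mul_le_mul_right H (by positivity)
  have S9 : a^3 * (q-a)^3 * (t-a) ≤ 1 * w^17 := by
    have H : (a^3 * (q-a)^3 * (t-a)) * w^8 ≤ (1 * w^17) * w^8 := by
      have step2 : (a^3 * (q-a)^3 * (t-a)) * w^8 ≤ (2*w^3)^3 * (7:ℝ)^3 * (7:ℝ) := by
        have e1 : (a^3 * (q-a)^3 * (t-a)) * w^8 = a^3 * ((q-a)*w^2)^3 * ((t-a)*w^2) := by ring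
        rw [e1]
        gcongr <;> first | assumption | positivity
      refine le_trans step2 ?_
      have hps := pow_step (c := 19208) (C := 1) hw 9 16 (by norm_num) (by norm_num)
      calc (2*w^3)^3 * (7:ℝ)^3 * (7:ℝ) = (19208:ℝ) * w^9 := by ring
        _ ≤ 1 * w^(9+16) := hps
        _ = (1 * w^17) * w^8 := by rw [pow_add]; ring
    exact le_of_mul_le_mul_right H (by positivity)
  have S10 : a^2 * (q-a)^5 ≤ 1 * w^17 := by
    have H : (a^2 * (q-a)^5) * w^10 ≤ (1 * w^17) * w^10 := by
      have step2 : (a^2 * (q-a)^5) * w^10 ≤ (2*w^3)^2 * (7:ℝ)^5 := by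
        have e1 : (a^2 * (q-a)^5) * w^10 = a^2 * ((q-a)*w^2)^5 := by ring
        rw [e1]
        gcongr <;> first | assumption | positivity
      refine le_trans step2 ?_
      have hps := pow_step (c := 67228) (C := 1) hw 6 21 (by norm_num) (by norm_num)
      calc (2*w^3)^2 * (7:ℝ)^5 = (67228:ℝ) * w^6 := by ring
        _ ≤ 1 * w^(6+21) := hps
        _ = (1 * w^17) * w^10 := by rw [pow_add]; ring
    exact le_of_mul_le_mul_right H (by positivity)
  have S11 : a * (q-a)^6 ≤ 1 * w^17 := by
    have H : (a * (q-a)^6) * w^12 ≤ (1 * w^17) * w^12 := by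
      have step2 : (a * (q-a)^6) * w^12 ≤ (2*w^3) * (7:ℝ)^6 := by
        have e1 : (a * (q-a)^6) * w^12 = a * ((q-a)*w^2)^6 := by ring
        rw [e1]
        gcongr <;> first | assumption | positivity
      refine le_trans step2 ?_
      have hps := pow_step (c := 235298) (C := 1) hw 3 26 (by norm_num) (by norm_num)
      calc (2*w^3) * (7:ℝ)^6 = (235298:ℝ) * w^3 := by ring
        _ ≤ 1 * w^(3+26) := hps
        _ = (1 * w^17) * w^12 := by rw [pow_add]; ring
    exact le_of_mul_le_mul_right H (by positivity)
  have S12 : (q-a)^7 ≤ 1 * w^17 := by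
    have H : ((q-a)^7) * w^14 ≤ (1 * w^17) * w^14 := by
      have step2 : ((q-a)^7) * w^14 ≤ (7:ℝ)^7 := by
        have e1 : ((q-a)^7) * w^14 = ((q-a)*w^2)^7 := by ring
        rw [e1]
        gcongr <;> first | assumption | positivity
      refine le_trans step2 ?_
      have hps := pow_step (c := 823543) (C := 1) hw 0 31 (by norm_num) (by norm_num)
      calc (7:ℝ)^7 = (823543:ℝ) * w^0 := by ring
        _ ≤ 1 * w^(0+31) := hps
        _ = (1 * w^17) * w^14 := by rw [pow_add]; ring
    exact le_of_mul_le_mul_right H (by positivity)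
  have hNb : |(-4*q^6*a - 24*w^6*q^3*t*a - 16*w^12*q^2*a + 64*w^12*t^2*a - 5*q^7)| ≤
      9400 * w^17 := by
    rw [hnum, abs_le]
    have n1 : 0 ≤ a^6*(q-a) := mul_nonneg (by positivity) he0
    have n2 : 0 ≤ a^6*(t-a) := mul_nonneg (by positivity) hd0
    have n3 : 0 ≤ a^5*(q-a)^2 := by positivity
    have n4 : 0 ≤ a^5*(q-a)*(t-a) := mul_nonneg (mul_nonneg (by positivity) he0) hd0
    have n5 : 0 ≤ a^5*(t-a)^2 := by positivity
    have n6 : 0 ≤ a^4*(q-a)^3 := mul_nonneg (by positivity) (pow_nonneg he0 3)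
    have n7 : 0 ≤ a^4*(q-a)^2*(t-a) := mul_nonneg (by positivity) hd0
    have n8 : 0 ≤ a^3*(q-a)^4 := by positivity
    have n9 : 0 ≤ a^3*(q-a)^3*(t-a) := mul_nonneg (mul_nonneg (by positivity) (pow_nonneg he0 3)) hd0
    have n10 : 0 ≤ a^2*(q-a)^5 := mul_nonneg (by positivity) (pow_nonneg he0 5)
    have n11 : 0 ≤ a*(q-a)^6 := by positivity
    have n12 : 0 ≤ (q-a)^7 := pow_nonneg he0 7
    have hw17 : (0:ℝ) ≤ w^17 := pow_nonneg hw0.le 17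
    exact ⟨by linarith, by linarith⟩
  rw [he4, abs_div, abs_of_pos (by positivity : (0:ℝ) < 16*w^6*q^7*a), mul_one_div,
    div_le_div_iff₀ (by positivity) (by positivity)]
  have hq7 : w^21 ≤ q^7 := by
    have h1 : (w^3)^7 ≤ q^7 := pow_le_pow_left₀ (by positivity) (le_trans haw hqa) 7
    calc w^21 = (w^3)^7 := by ring
      _ ≤ q^7 := h1
  have hch : w^21 * w^3 ≤ q^7 * a := mul_le_mul hq7 haw (pow_nonneg hw0.le 3) (by positivity)
  calc |(-4*q^6*a - 24*w^6*q^3*t*a - 16*w^12*q^2*a + 64*w^12*t^2*a - 5*q^7)| * w^13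
      ≤ (9400*w^17) * w^13 := mul_le_mul_of_nonneg_right hNb (pow_nonneg hw0.le 13)
    _ = 9400 * w^30 := by ring
    _ ≤ 16000 * w^(30+0) := pow_step hw 30 0 (by norm_num) (by norm_num)
    _ = (1000*(16*w^6)) * (w^21*w^3) := by ring
    _ ≤ (1000*(16*w^6)) * (q^7*a) := mul_le_mul_of_nonneg_left hch (by positivity)
    _ = 1000 * (16*w^6*q^7*a) := by ring

end estimates


lemma aux_w10 {w : ℝ} (hw0 : 0 < w) (h4 : 10000 ≤ w^4) : 10 ≤ w := by
  by_contra h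
  push_neg at h
  have h2 : w^2 < 100 := by nlinarith
  nlinarith [h2, pow_pos hw0 2]

lemma aux_t2w {t w a : ℝ} (hw10 : 10 ≤ w) (ht100 : 100 ≤ t) (ha2 : 3*a^2 = 4*w^6)
    (h : t^2 ≤ a^2 + 2*t - 1) : t ≤ 2*w^3 := by
  have hw0 : (0:ℝ) < w := by linarith
  have hw6 : (1000000:ℝ) ≤ w^6 := by
    nlinarith [pow_le_pow_left₀ (by norm_num : (0:ℝ) ≤ 10) hw10 6]
  nlinarith [pow_pos hw0 3, sq_nonneg (t - 2*w^3), sq_nonneg (t + 2*w^3 - 2)]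

lemma aux_m2w {m w t : ℝ} (hm0 : 0 < m) (hw0 : 0 < w) (hm3 : m^3 = t)
    (ht2w : t ≤ 2*w^3) : m ≤ 2*w := by
  nlinarith [sq_nonneg (m - 2*w), sq_nonneg (m + 2*w), mul_pos hm0 hw0, sq_nonneg m]

/-- **Asymptotics of the inverse function `t(ζ̄)` and its first three derivatives as
`ζ̄ → +∞`.** -/
theorem t_asymptotics (tf : ℝ → ℝ) (htf : IsZetaInv tf) :
    ∃ C > (0:ℝ), ∃ Z > (0:ℝ), ∀ u : ℝ, Z ≤ u →
      |tf u - ((4:ℝ)/3) ^ ((1:ℝ)/2) * u ^ ((3:ℝ)/4)| ≤ C * u ^ (-(1:ℝ)/4) ∧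
      |deriv tf u - ((3:ℝ)/4) ^ ((1:ℝ)/2) * u ^ (-(1:ℝ)/4)| ≤ C * u ^ (-(5:ℝ)/4) ∧
      |iteratedDeriv 2 tf u + (1/4) * ((3:ℝ)/4) ^ ((1:ℝ)/2) * u ^ (-(5:ℝ)/4)| ≤
        C * u ^ (-(9:ℝ)/4) ∧
      |iteratedDeriv 3 tf u - (5/16) * ((3:ℝ)/4) ^ ((1:ℝ)/2) * u ^ (-(9:ℝ)/4)| ≤
        C * u ^ (-(13:ℝ)/4) := by
  refine ⟨1000, by norm_num, 20000, by norm_num, fun u hu => ?_⟩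
  have hu4 : (10000:ℝ) ≤ u := by linarith
  obtain ⟨ht100, hzt, hup, htd⟩ := key htf hu4
  obtain ⟨hu0, -, hq0, hq2, hsu, hsu0⟩ := basicfacts htf hu4
  have ht1 : (1:ℝ) ≤ tf u := by linarith
  have htpos : (0:ℝ) < tf u := by linarith
  set t := tf u with htdef
  set q := qf tf u with hqdef
  set w := u ^ ((1:ℝ)/4) with hwdef
  set a := ((4:ℝ)/3) ^ ((1:ℝ)/2) * u ^ ((3:ℝ)/4) with hadef
  have hw0 : (0:ℝ) < w := Real.rpow_pos_of_pos hu0 _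
  have hpk : ∀ (k : ℕ) (e : ℝ), (k:ℝ) * (1/4) = e → u ^ e = w ^ k := by
    intro k e he
    rw [← he, mul_comm, Real.rpow_mul hu0.le, Real.rpow_natCast]
  have hw4 : w^4 = u := by rw [← hpk 4 1 (by norm_num), Real.rpow_one]
  have hw10 : 10 ≤ w := aux_w10 hw0 (by rw [hw4]; linarith)
  have hsuw : Real.sqrt u = w^2 := by
    rw [Real.sqrt_eq_rpow, hpk 2 (1/(2:ℝ)) (by norm_num)]
  have ha0 : (0:ℝ) < a := by
    rw [hadef]; positivity
  have hinv34 : ((4:ℝ)/3) ^ ((1:ℝ)/2) * ((3:ℝ)/4) ^ ((1:ℝ)/2) = 1 := by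
    rw [← Real.mul_rpow (by norm_num) (by norm_num)]
    norm_num
  have ha2 : 3 * a^2 = 4 * w^6 := by
    have h1 : (((4:ℝ)/3) ^ ((1:ℝ)/2))^2 = 4/3 := by
      rw [← Real.rpow_natCast (((4:ℝ)/3) ^ ((1:ℝ)/2)) 2, ← Real.rpow_mul (by norm_num)]
      norm_num
    have h2 : (u ^ ((3:ℝ)/4))^2 = w^6 := by
      rw [← Real.rpow_natCast (u ^ ((3:ℝ)/4)) 2, ← Real.rpow_mul hu0.le]
      norm_num
      exact hpk 6 ((3:ℝ)/2) (by norm_num)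
    calc 3*a^2 = 3 * ((((4:ℝ)/3) ^ ((1:ℝ)/2))^2 * (u ^ ((3:ℝ)/4))^2) := by
          rw [hadef]; ring
      _ = 4 * w^6 := by rw [h1, h2]; ring
  -- bounds on t^2 - a^2
  have hw6eq : u ^ ((3:ℝ)/2) = w^6 := hpk 6 ((3:ℝ)/2) (by norm_num)
  have hJw : (3:ℝ)/2 * J t = w^6 := by rw [hup, hw6eq]
  have hJu := J_upper ht1
  have hJl := J_lower ht1
  have hd1 : 1 ≤ t^2 - a^2 := by linarith
  have hlt : Real.log t ≤ t - 1 := Real.log_le_sub_one_of_pos htpos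
  have hd2' : t^2 - a^2 ≤ 1 + 2 * Real.log t := by linarith
  have ht2w : t ≤ 2*w^3 := aux_t2w hw10 ht100 ha2 (by linarith)
  have hlog : Real.log t ≤ 6 * w := by
    set m := t ^ ((1:ℝ)/3) with hmdef
    have hm0 : 0 < m := Real.rpow_pos_of_pos htpos _
    have hm3 : m^3 = t := by
      rw [hmdef, ← Real.rpow_natCast (t ^ ((1:ℝ)/3)) 3, ← Real.rpow_mul htpos.le]
      norm_num
    have hlogm : Real.log m = (1/3) * Real.log t := by
      rw [hmdef, Real.log_rpow htpos]
    have hlm : Real.log m ≤ m - 1 := Real.log_le_sub_one_of_pos hm0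
    have hm2w : m ≤ 2*w := aux_m2w hm0 hw0 hm3 ht2w
    linarith
  have hd2 : t^2 - a^2 ≤ 13 * w := by linarith
  -- rewriting helpers
  have hr1 : u ^ (-(1:ℝ)/4) = 1/w := by
    rw [neg_div, Real.rpow_neg hu0.le, hpk 1 ((1:ℝ)/4) (by norm_num), pow_one, one_div]
  have hr5 : u ^ (-(5:ℝ)/4) = 1/w^5 := by
    rw [neg_div, Real.rpow_neg hu0.le, hpk 5 ((5:ℝ)/4) (by norm_num), one_div]
  have hr9 : u ^ (-(9:ℝ)/4) = 1/w^9 := by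
    rw [neg_div, Real.rpow_neg hu0.le, hpk 9 ((9:ℝ)/4) (by norm_num), one_div]
  have hr13 : u ^ (-(13:ℝ)/4) = 1/w^13 := by
    rw [neg_div, Real.rpow_neg hu0.le, hpk 13 ((13:ℝ)/4) (by norm_num), one_div]
  have hmulpow : ∀ e1 e2 : ℝ, u ^ e1 * u ^ e2 = u ^ (e1+e2) :=
    fun e1 e2 => (Real.rpow_add hu0 e1 e2).symm
  have key1 : a * (((3:ℝ)/4) ^ ((1:ℝ)/2) * u ^ (-(1:ℝ)/4)) = w^2 := by
    rw [hadef, show ((4:ℝ)/3) ^ ((1:ℝ)/2) * u ^ ((3:ℝ)/4) * (((3:ℝ)/4) ^ ((1:ℝ)/2) * u ^ (-(1:ℝ)/4))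
        = (((4:ℝ)/3) ^ ((1:ℝ)/2) * ((3:ℝ)/4) ^ ((1:ℝ)/2)) * (u ^ ((3:ℝ)/4) * u ^ (-(1:ℝ)/4)) from by ring,
      hinv34, hmulpow, one_mul]
    exact hpk 2 ((3:ℝ)/4 + -(1:ℝ)/4) (by norm_num)
  have key5 : (a * w^2) * (((3:ℝ)/4) ^ ((1:ℝ)/2) * u ^ (-(5:ℝ)/4)) = 1 := by
    rw [hadef, ← hpk 2 ((1:ℝ)/2) (by norm_num),
      show ((4:ℝ)/3) ^ ((1:ℝ)/2) * u ^ ((3:ℝ)/4) * u ^ ((1:ℝ)/2) * (((3:ℝ)/4) ^ ((1:ℝ)/2) * u ^ (-(5:ℝ)/4))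
        = (((4:ℝ)/3) ^ ((1:ℝ)/2) * ((3:ℝ)/4) ^ ((1:ℝ)/2)) * (u ^ ((3:ℝ)/4) * u ^ ((1:ℝ)/2) * u ^ (-(5:ℝ)/4)) from by ring,
      hinv34, hmulpow, hmulpow, one_mul,
      show (3:ℝ)/4 + (1:ℝ)/2 + -(5:ℝ)/4 = 0 by norm_num, Real.rpow_zero]
  have key9 : (a * w^6) * (((3:ℝ)/4) ^ ((1:ℝ)/2) * u ^ (-(9:ℝ)/4)) = 1 := by
    rw [hadef, ← hpk 6 ((3:ℝ)/2) (by norm_num),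
      show ((4:ℝ)/3) ^ ((1:ℝ)/2) * u ^ ((3:ℝ)/4) * u ^ ((3:ℝ)/2) * (((3:ℝ)/4) ^ ((1:ℝ)/2) * u ^ (-(9:ℝ)/4))
        = (((4:ℝ)/3) ^ ((1:ℝ)/2) * ((3:ℝ)/4) ^ ((1:ℝ)/2)) * (u ^ ((3:ℝ)/4) * u ^ ((3:ℝ)/2) * u ^ (-(9:ℝ)/4)) from by ring,
      hinv34, hmulpow, hmulpow, one_mul,
      show (3:ℝ)/4 + (3:ℝ)/2 + -(9:ℝ)/4 = 0 by norm_num, Real.rpow_zero]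
  have htar1 : ((3:ℝ)/4) ^ ((1:ℝ)/2) * u ^ (-(1:ℝ)/4) = w^2/a := by
    rw [eq_div_iff ha0.ne']
    linear_combination key1
  have htar5 : 1/4 * ((3:ℝ)/4) ^ ((1:ℝ)/2) * u ^ (-(5:ℝ)/4) = 1/(4*(a*w^2)) := by
    rw [eq_div_iff (by positivity)]
    linear_combination key5
  have htar9 : 5/16 * ((3:ℝ)/4) ^ ((1:ℝ)/2) * u ^ (-(9:ℝ)/4) = 5/(16*(a*w^6)) := by
    rw [eq_div_iff (by positivity)]
    linear_combination 5 * key9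
  have huw2 : u * w^2 = w^6 := by rw [← hw4]; ring
  have huw4 : u * t = w^4 * t := by rw [hw4]
  refine ⟨?_, ?_, ?_, ?_⟩
  · rw [hr1]
    exact boundB1 hw10 ht100 hq0 hq2 ha0 ha2 hd1 hd2
  · rw [hr5, deriv_tf_eq htf hu4, htar1]
    have hd1w : d1 tf u = w^2/q := by
      rw [d1, hsuw, hqdef]
    rw [hd1w]
    exact boundB2 hw10 ht100 hq0 hq2 ha0 ha2 hd1 hd2
  · rw [hr9, iteratedDeriv2_eq htf (by linarith), htar5]
    have hd2w : d2 tf u = 1/(2*w^2*q) - w^4*t/q^4 := by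
      rw [d2, hsuw, ← htdef, ← hqdef, huw4]
    rw [hd2w]
    exact boundB3 hw10 ht100 hq0 hq2 ha0 ha2 hd1 hd2
  · rw [hr13, iteratedDeriv3_eq htf (by linarith), htar9]
    have hd3w : iteratedDeriv 3 tf u = iteratedDeriv 3 tf u := rfl
    have hd3v : d3 tf u = -(1/(4*w^6*q)) - (3/2)*t/q^4 - w^6/q^5 + 4*w^6*t^2/q^7 := by
      rw [d3, hsuw, ← htdef, ← hqdef, huw2]
    rw [hd3v]
    exact boundB4 hw10 ht100 hq0 hq2 ha0 ha2 hd1 hd2
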